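/- arXiv:2012.06796 — 3 statements merged into one kernel-verified Lean document; each statement's English description precedes it below -/
import Mathlib

section
/- Let n ∈ ℕ, m > 0, s > n/2 + 1, and define G^n_{s,m}(r) := (2π)^{-n/2} Γ(s)^{-1} ∫₀^∞ e^{-r²/(2t)} e^{-m²t} t^{s-n/2-1} dt. Then lim_{r→0⁺} r^{-2}·(G^n_{s,m}(0) - G^n_{s,m}(r)) = Γ(s - n/2 - 1) / (2^{n/2+1} · m^{2s-n-2} · π^{n/2} · Γ(s)). -/
open Real Filter

/-- The radial profile of the Green kernel of `(m² - Δ/2)^s` on `ℝⁿ`. -/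
noncomputable def euclideanGreenKernel (n : ℕ) (s m r : ℝ) : ℝ :=
  (2 * Real.pi) ^ (-(n : ℝ) / 2) * (Real.Gamma s)⁻¹ *
    ∫ t in Set.Ioi (0 : ℝ),
      Real.exp (-r ^ 2 / (2 * t)) * Real.exp (-m ^ 2 * t) * t ^ (s - (n : ℝ) / 2 - 1)

open MeasureTheory in
/-- Small-`r` asymptotics of the Euclidean Green kernel in the regular case `s > n/2 + 1`:
`(G(0) - G(r))/r² → Γ(s - n/2 - 1)/(2^{n/2+1} m^{2s-n-2} π^{n/2} Γ(s))`. -/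
theorem euclidean_green_kernel_asymptotics_smooth (n : ℕ) (s m : ℝ)
    (hm : 0 < m) (hs : (n : ℝ) / 2 + 1 < s) :
    Tendsto
      (fun r : ℝ =>
        (euclideanGreenKernel n s m 0 - euclideanGreenKernel n s m r) / r ^ 2)
      (nhdsWithin 0 (Set.Ioi 0))
      (nhds (Real.Gamma (s - (n : ℝ) / 2 - 1) /
        (2 ^ ((n : ℝ) / 2 + 1) * m ^ (2 * s - (n : ℝ) - 2) * Real.pi ^ ((n : ℝ) / 2) *
          Real.Gamma s))) := by
  set α : ℝ := s - (n : ℝ) / 2 - 1 with hα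
  have hα0 : 0 < α := by simp only [hα]; linarith
  have hm2 : (0 : ℝ) < m ^ 2 := by positivity
  set C : ℝ := (2 * Real.pi) ^ (-(n : ℝ) / 2) * (Real.Gamma s)⁻¹ with hC
  -- measurability of the integrands
  have hmeas : ∀ r : ℝ, AEStronglyMeasurable
      (fun t : ℝ => Real.exp (-r ^ 2 / (2 * t)) * Real.exp (-m ^ 2 * t) * t ^ α)
      (volume.restrict (Set.Ioi 0)) := by
    intro r
    apply Measurable.aestronglyMeasurable
    fun_prop
  -- base integrability
  have hbase : ∀ β : ℝ, -1 < β →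
      IntegrableOn (fun t : ℝ => t ^ β * Real.exp (-m ^ 2 * t)) (Set.Ioi 0) := by
    intro β hβ
    have := integrableOn_rpow_mul_exp_neg_mul_rpow (s := β) (p := 1) (b := m ^ 2)
      hβ one_pos hm2
    simpa [Real.rpow_one] using this
  -- integrability of each integrand
  have hint : ∀ r : ℝ, IntegrableOn
      (fun t : ℝ => Real.exp (-r ^ 2 / (2 * t)) * Real.exp (-m ^ 2 * t) * t ^ α)
      (Set.Ioi 0) := by
    intro r
    refine Integrable.mono' (g := fun t => t ^ α * Real.exp (-m ^ 2 * t))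
      (hbase α (by linarith)) (hmeas r) ?_
    filter_upwards [self_mem_ae_restrict measurableSet_Ioi] with t ht
    have ht0 : (0 : ℝ) < t := ht
    have h1 : Real.exp (-r ^ 2 / (2 * t)) ≤ 1 := by
      apply Real.exp_le_one_iff.mpr
      exact div_nonpos_of_nonpos_of_nonneg (by simp [sq_nonneg]) (by positivity)
    have h2 : (0 : ℝ) ≤ Real.exp (-m ^ 2 * t) * t ^ α := by positivity
    rw [Real.norm_eq_abs, abs_of_nonneg (by positivity)]
    calc Real.exp (-r ^ 2 / (2 * t)) * Real.exp (-m ^ 2 * t) * t ^ α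
        ≤ 1 * Real.exp (-m ^ 2 * t) * t ^ α := by
          apply mul_le_mul_of_nonneg_right (mul_le_mul_of_nonneg_right h1 (by positivity))
            (by positivity)
      _ = t ^ α * Real.exp (-m ^ 2 * t) := by ring
  -- rewrite the difference
  have key : ∀ r : ℝ, euclideanGreenKernel n s m 0 - euclideanGreenKernel n s m r
      = C * ∫ t in Set.Ioi (0 : ℝ),
          (1 - Real.exp (-r ^ 2 / (2 * t))) * Real.exp (-m ^ 2 * t) * t ^ α := by
    intro r
    rw [euclideanGreenKernel, euclideanGreenKernel, ← hα, ← hC, ← mul_sub,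
      ← integral_sub (hint 0) (hint r)]
    congr 1
    apply integral_congr_ae
    filter_upwards with t
    rw [show (-(0:ℝ) ^ 2 / (2 * t)) = 0 by simp, Real.exp_zero]
    ring
  -- dominated convergence
  have main : Tendsto
      (fun r : ℝ => ∫ t in Set.Ioi (0 : ℝ),
        ((1 - Real.exp (-r ^ 2 / (2 * t))) * Real.exp (-m ^ 2 * t) * t ^ α) / r ^ 2)
      (nhdsWithin 0 (Set.Ioi 0))
      (nhds (∫ t in Set.Ioi (0 : ℝ), Real.exp (-m ^ 2 * t) * t ^ α / (2 * t))) := by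
    apply tendsto_integral_filter_of_dominated_convergence
      (fun t => t ^ (α - 1) * Real.exp (-m ^ 2 * t) / 2)
    · filter_upwards with r
      apply Measurable.aestronglyMeasurable
      fun_prop
    · filter_upwards [self_mem_nhdsWithin] with r hr
      filter_upwards [self_mem_ae_restrict measurableSet_Ioi] with t ht
      have ht0 : (0 : ℝ) < t := ht
      have hr0 : (0 : ℝ) < r := hr
      have hx : (0 : ℝ) < r ^ 2 / (2 * t) := by positivity
      have h1 : Real.exp (-r ^ 2 / (2 * t)) ≤ 1 := by
        apply Real.exp_le_one_iff.mpr
        exact div_nonpos_of_nonpos_of_nonneg (by simp [sq_nonneg]) (by positivity)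
      have h2 : 1 - Real.exp (-r ^ 2 / (2 * t)) ≤ r ^ 2 / (2 * t) := by
        have h := Real.add_one_le_exp (-(r ^ 2 / (2 * t)))
        have he : Real.exp (-r ^ 2 / (2 * t)) = Real.exp (-(r ^ 2 / (2 * t))) := by
          congr 1; ring
        rw [he]; linarith
      have h0 : 0 ≤ 1 - Real.exp (-r ^ 2 / (2 * t)) := by linarith
      have hnn : 0 ≤ ((1 - Real.exp (-r ^ 2 / (2 * t))) * Real.exp (-m ^ 2 * t) * t ^ α) / r ^ 2 := by
        apply div_nonneg _ (by positivity)
        exact mul_nonneg (mul_nonneg h0 (Real.exp_pos _).le) (Real.rpow_nonneg ht0.le _)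
      rw [Real.norm_eq_abs, abs_of_nonneg hnn]
      have htpow : t ^ α = t ^ (α - 1) * t := by
        rw [← Real.rpow_add_one ht0.ne' (α - 1)]; ring_nf
      calc ((1 - Real.exp (-r ^ 2 / (2 * t))) * Real.exp (-m ^ 2 * t) * t ^ α) / r ^ 2
          ≤ ((r ^ 2 / (2 * t)) * Real.exp (-m ^ 2 * t) * t ^ α) / r ^ 2 := by
            apply div_le_div_of_nonneg_right ?_ (by positivity)
            apply mul_le_mul_of_nonneg_right (mul_le_mul_of_nonneg_right h2 (by positivity))
              (by positivity)
        _ = t ^ (α - 1) * Real.exp (-m ^ 2 * t) / 2 := by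
            rw [htpow]; field_simp
    · exact ((hbase (α - 1) (by linarith)).const_mul (1/2)).congr
        (Filter.Eventually.of_forall (fun t => by ring))
    · -- pointwise limit
      filter_upwards [self_mem_ae_restrict measurableSet_Ioi] with t ht
      have ht0 : (0 : ℝ) < t := ht
      have h1 : HasDerivAt (fun x : ℝ => 1 - Real.exp (-x)) 1 0 := by
        have h := ((Real.hasDerivAt_exp (-0 : ℝ)).comp 0 (hasDerivAt_neg 0)).const_sub 1
        simpa using h
      have hslope := hasDerivAt_iff_tendsto_slope.mp h1
      have hx : Tendsto (fun r : ℝ => r ^ 2 / (2 * t)) (nhdsWithin 0 (Set.Ioi 0))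
          (nhdsWithin 0 {(0 : ℝ)}ᶜ) := by
        apply tendsto_nhdsWithin_of_tendsto_nhds_of_eventually_within
        · have : Tendsto (fun r : ℝ => r ^ 2 / (2 * t)) (nhds 0) (nhds (0 ^ 2 / (2 * t))) := by
            apply Continuous.tendsto; fun_prop (disch := positivity)
          simpa using this.mono_left nhdsWithin_le_nhds
        · filter_upwards [self_mem_nhdsWithin] with r hr
          have : (0:ℝ) < r ^ 2 / (2 * t) := by
            have : (0:ℝ) < r := hr
            positivity
          exact this.ne'
      have hcomp := (hslope.comp hx).mul_const (Real.exp (-m ^ 2 * t) * t ^ α / (2 * t))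
      rw [one_mul] at hcomp
      apply hcomp.congr'
      filter_upwards [self_mem_nhdsWithin] with r hr
      have hr0 : (0 : ℝ) < r := hr
      have hx0 : (0 : ℝ) < r ^ 2 / (2 * t) := by positivity
      simp only [Function.comp, slope_def_field]
      simp only [neg_zero, Real.exp_zero, sub_zero]
      field_simp
      ring
  have hval : (∫ t in Set.Ioi (0 : ℝ), Real.exp (-m ^ 2 * t) * t ^ α / (2 * t))
      = (1 / 2) * ((1 / m ^ 2) ^ α * Real.Gamma α) := by
    rw [← integral_rpow_mul_exp_neg_mul_Ioi hα0 hm2, ← integral_const_mul]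
    apply setIntegral_congr_fun measurableSet_Ioi
    intro t ht
    have ht0 : (0 : ℝ) < t := ht
    have htpow : t ^ α = t ^ (α - 1) * t := by
      rw [← Real.rpow_add_one ht0.ne' (α - 1)]; ring_nf
    simp only [htpow, neg_mul]
    field_simp
  have final : Tendsto
      (fun r : ℝ =>
        (euclideanGreenKernel n s m 0 - euclideanGreenKernel n s m r) / r ^ 2)
      (nhdsWithin 0 (Set.Ioi 0))
      (nhds (C * ((1 / 2) * ((1 / m ^ 2) ^ α * Real.Gamma α)))) := by
    rw [← hval]
    have := main.const_mul C
    apply this.congr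
    intro r
    rw [key r, mul_div_assoc, ← integral_div]
  convert final using 2
  rw [hC]
  have hn : (0:ℝ) ≤ (n:ℝ) := Nat.cast_nonneg n
  have hΓ : (0 : ℝ) < Real.Gamma s := Real.Gamma_pos_of_pos (by linarith)
  have hpi := Real.pi_pos
  have e1 : ((2:ℝ) * Real.pi) ^ (-(n : ℝ) / 2)
      = ((2:ℝ) ^ ((n:ℝ)/2) * Real.pi ^ ((n:ℝ)/2))⁻¹ := by
    rw [show (-(n:ℝ)/2) = -((n:ℝ)/2) by ring, Real.rpow_neg (by positivity),
      Real.mul_rpow (by norm_num) hpi.le]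
  have e2 : ((1:ℝ)/m^2) ^ α = (m ^ (2*s - (n:ℝ) - 2))⁻¹ := by
    rw [one_div, Real.inv_rpow hm2.le, ← Real.rpow_natCast m 2, ← Real.rpow_mul hm.le]
    have h22 : ((2:ℕ):ℝ) * α = 2*s - (n:ℝ) - 2 := by rw [hα]; push_cast; ring
    rw [h22]
  have e3 : (2:ℝ) ^ ((n:ℝ)/2 + 1) = 2 ^ ((n:ℝ)/2) * 2 := by
    rw [Real.rpow_add (by norm_num : (0:ℝ) < 2), Real.rpow_one]
  have hms : (0:ℝ) < m ^ (2 * s - (n:ℝ) - 2) := Real.rpow_pos_of_pos hm _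
  have h2p : (0:ℝ) < (2:ℝ) ^ ((n:ℝ)/2) := Real.rpow_pos_of_pos (by norm_num) _
  have hpp : (0:ℝ) < Real.pi ^ ((n:ℝ)/2) := Real.rpow_pos_of_pos hpi _
  rw [e1, e2, e3]
  rw [div_eq_iff (by positivity)]
  field_simp
end

section
/- Let n ∈ ℕ, m > 0, and n/2 < s < n/2 + 1. With G^n_{s,m} as the Euclidean Green kernel defined by the subordination integral, lim_{r→0⁺} r^{-(2s-n)}·(G^n_{s,m}(0) - G^n_{s,m}(r)) = -Γ(n/2 - s) / (2^s · π^{n/2} · Γ(s)). -/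
open Real Filter

open MeasureTheory Set Topology

private lemma my_exp_le_one {x : ℝ} (hx : x ≤ 0) : Real.exp x ≤ 1 := by
  rw [← Real.exp_zero]; exact Real.exp_le_exp.mpr hx

private lemma my_one_sub_exp_nonneg {x : ℝ} (hx : 0 ≤ x) : 0 ≤ 1 - Real.exp (-x) :=
  sub_nonneg.mpr (my_exp_le_one (by linarith))

private lemma my_one_sub_exp_le (x : ℝ) : 1 - Real.exp (-x) ≤ x := by
  have := Real.add_one_le_exp (-x); linarith

private lemma my_exp_neg_le_inv {t : ℝ} (ht : 0 < t) : Real.exp (-t) ≤ t⁻¹ := by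
  rw [Real.exp_neg]
  apply inv_anti₀ ht
  have := Real.add_one_le_exp t; linarith

private lemma contOn_inner : ContinuousOn (fun u : ℝ => Real.exp (-1 / (2 * u))) (Ioi 0) :=
  Real.continuous_exp.comp_continuousOn <|
    continuousOn_const.div (continuous_const.mul continuous_id).continuousOn
      (fun x hx => by have : (0:ℝ) < x := hx; positivity)

private lemma contOn_rpow (c : ℝ) : ContinuousOn (fun u : ℝ => u ^ c) (Ioi 0) :=
  continuousOn_id.rpow_const fun x hx => Or.inl (ne_of_gt hx)

private lemma contOn_h (c : ℝ) :
    ContinuousOn (fun u : ℝ => (1 - Real.exp (-1 / (2 * u))) * u ^ c) (Ioi 0) :=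
  (continuousOn_const.sub contOn_inner).mul (contOn_rpow c)

private lemma contOn_psi (c : ℝ) :
    ContinuousOn (fun u : ℝ => Real.exp (-1 / (2 * u)) * u ^ c) (Ioi 0) :=
  contOn_inner.mul (contOn_rpow c)

private lemma contOn_phi (b c : ℝ) :
    ContinuousOn (fun u : ℝ => (1 - Real.exp (-1 / (2 * u))) * Real.exp (b * u) * u ^ c)
      (Ioi 0) :=
  ((continuousOn_const.sub contOn_inner).mul
    ((Real.continuous_exp.comp (continuous_const.mul continuous_id)).continuousOn)).mul
    (contOn_rpow c)

private lemma integrableOn_rpow_Ioc {c : ℝ} (hc : -1 < c) :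
    IntegrableOn (fun u : ℝ => u ^ c) (Ioc (0:ℝ) 1) := by
  have := intervalIntegral.intervalIntegrable_rpow' (a := 0) (b := 1) hc
  rwa [intervalIntegrable_iff_integrableOn_Ioc_of_le zero_le_one] at this

private lemma integrable_h {a : ℝ} (ha : 0 < a) (ha1 : a < 1) :
    IntegrableOn (fun u : ℝ => (1 - Real.exp (-1 / (2 * u))) * u ^ (a - 1)) (Ioi 0) := by
  rw [← Ioc_union_Ioi_eq_Ioi (zero_le_one' ℝ), integrableOn_union]
  constructor
  · refine Integrable.mono' (integrableOn_rpow_Ioc (c := a-1) (by linarith))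
      (((contOn_h (a-1)).mono Ioc_subset_Ioi_self).aestronglyMeasurable measurableSet_Ioc) ?_
    rw [ae_restrict_iff' measurableSet_Ioc]
    refine .of_forall fun x hx => ?_
    have hx0 : 0 < x := hx.1
    have h1 : 0 ≤ 1 - Real.exp (-1 / (2 * x)) := by
      rw [neg_div]; exact my_one_sub_exp_nonneg (by positivity)
    have h2 : 1 - Real.exp (-1 / (2 * x)) ≤ 1 := by
      have := Real.exp_pos (-1 / (2 * x)); linarith
    rw [Real.norm_eq_abs, abs_of_nonneg (mul_nonneg h1 (Real.rpow_nonneg hx0.le _))]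
    calc (1 - Real.exp (-1 / (2 * x))) * x ^ (a-1) ≤ 1 * x ^ (a-1) := by
          exact mul_le_mul_of_nonneg_right h2 (Real.rpow_nonneg hx0.le _)
      _ = x ^ (a-1) := one_mul _
  · refine Integrable.mono' ((integrableOn_Ioi_rpow_of_lt (by linarith : a - 2 < -1)
      one_pos).const_mul (1/2 : ℝ))
      (((contOn_h (a-1)).mono (Ioi_subset_Ioi zero_le_one)).aestronglyMeasurable
        measurableSet_Ioi) ?_
    rw [ae_restrict_iff' measurableSet_Ioi]
    refine .of_forall fun x hx => ?_
    have hx1 : (1:ℝ) < x := hx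
    have hx0 : 0 < x := lt_trans one_pos hx1
    have h1 : 0 ≤ 1 - Real.exp (-1 / (2 * x)) := by
      rw [neg_div]; exact my_one_sub_exp_nonneg (by positivity)
    have h2 : 1 - Real.exp (-1 / (2 * x)) ≤ 1 / (2 * x) := by
      rw [neg_div]; exact (my_one_sub_exp_le _)
    rw [Real.norm_eq_abs, abs_of_nonneg (mul_nonneg h1 (Real.rpow_nonneg hx0.le _))]
    have e1 : x ^ (a-1) = x ^ (a-2) * x := by
      rw [show a - 1 = (a-2) + 1 by ring, Real.rpow_add hx0, Real.rpow_one]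
    calc (1 - Real.exp (-1 / (2 * x))) * x ^ (a-1)
        ≤ (1 / (2*x)) * x ^ (a-1) :=
          mul_le_mul_of_nonneg_right h2 (Real.rpow_nonneg hx0.le _)
      _ = 1/2 * x ^ (a-2) := by rw [e1]; field_simp

private lemma integrable_psi {a : ℝ} (ha : 0 < a) (ha1 : a < 1) :
    IntegrableOn (fun u : ℝ => Real.exp (-1 / (2 * u)) * u ^ (a - 2)) (Ioi 0) := by
  rw [← Ioc_union_Ioi_eq_Ioi (zero_le_one' ℝ), integrableOn_union]
  constructor
  · refine Integrable.mono' ((integrableOn_rpow_Ioc (c := a-1) (by linarith)).const_mul 2)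
      (((contOn_psi (a-2)).mono Ioc_subset_Ioi_self).aestronglyMeasurable measurableSet_Ioc) ?_
    rw [ae_restrict_iff' measurableSet_Ioc]
    refine .of_forall fun x hx => ?_
    have hx0 : 0 < x := hx.1
    have h2 : Real.exp (-1 / (2 * x)) ≤ 2 * x := by
      have h := my_exp_neg_le_inv (t := 1/(2*x)) (by positivity)
      rw [neg_div]
      calc Real.exp (-(1/(2*x))) ≤ (1/(2*x))⁻¹ := h
        _ = 2 * x := by rw [one_div, inv_inv]
    have hexp : (0:ℝ) ≤ Real.exp (-1 / (2 * x)) := (Real.exp_pos _).le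
    rw [Real.norm_eq_abs, abs_of_nonneg (mul_nonneg hexp (Real.rpow_nonneg hx0.le _))]
    have e1 : x ^ (a-1) = x * x ^ (a-2) := by
      rw [show a - 1 = 1 + (a-2) by ring, Real.rpow_add hx0, Real.rpow_one]
    calc Real.exp (-1 / (2 * x)) * x ^ (a-2) ≤ (2*x) * x ^ (a-2) :=
          mul_le_mul_of_nonneg_right h2 (Real.rpow_nonneg hx0.le _)
      _ = 2 * x ^ (a-1) := by rw [e1]; ring
  · refine Integrable.mono' (integrableOn_Ioi_rpow_of_lt (by linarith : a - 2 < -1) one_pos)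
      (((contOn_psi (a-2)).mono (Ioi_subset_Ioi zero_le_one)).aestronglyMeasurable
        measurableSet_Ioi) ?_
    rw [ae_restrict_iff' measurableSet_Ioi]
    refine .of_forall fun x hx => ?_
    have hx0 : 0 < x := lt_trans one_pos hx
    have h2 : Real.exp (-1 / (2 * x)) ≤ 1 := my_exp_le_one (by
      rw [neg_div]; have : (0:ℝ) ≤ 1/(2*x) := by positivity
      linarith)
    have hexp : (0:ℝ) ≤ Real.exp (-1 / (2 * x)) := (Real.exp_pos _).le
    rw [Real.norm_eq_abs, abs_of_nonneg (mul_nonneg hexp (Real.rpow_nonneg hx0.le _))]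
    calc Real.exp (-1 / (2 * x)) * x ^ (a-2) ≤ 1 * x ^ (a-2) :=
          mul_le_mul_of_nonneg_right h2 (Real.rpow_nonneg hx0.le _)
      _ = x ^ (a-2) := one_mul _

private lemma psi_value {a : ℝ} (ha : 0 < a) (ha1 : a < 1) :
    ∫ u in Ioi (0:ℝ), Real.exp (-1 / (2 * u)) * u ^ (a - 2)
      = 2 ^ (1 - a) * Real.Gamma (1 - a) := by
  set g : ℝ → ℝ := fun y => Real.exp (-y/2) * y ^ (-a) with hg
  have step1 : ∫ u in Ioi (0:ℝ), Real.exp (-1 / (2 * u)) * u ^ (a - 2)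
      = ∫ x in Ioi (0:ℝ), (|(-1:ℝ)| * x ^ ((-1:ℝ) - 1)) • g (x ^ (-1:ℝ)) := by
    refine setIntegral_congr_fun measurableSet_Ioi fun x hx => ?_
    have hx0 : 0 < x := hx
    have e0 : x ^ (-1:ℝ) = x⁻¹ := by
      rw [Real.rpow_neg_one]
    have e1 : (x ^ (-1:ℝ)) ^ (-a) = x ^ a := by
      rw [← Real.rpow_mul hx0.le]; norm_num
    have e2 : -(x ^ (-1:ℝ))/2 = -1/(2*x) := by
      rw [e0, neg_div, neg_div, inv_eq_one_div, div_div, mul_comm x 2]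
    rw [hg]; simp only [smul_eq_mul]
    rw [e1, e2, abs_of_nonpos (by norm_num : (-1:ℝ) ≤ 0)]
    rw [show a - 2 = ((-1:ℝ) - 1) + a by ring, Real.rpow_add hx0]
    ring
  rw [step1, integral_comp_rpow_Ioi g (by norm_num : (-1:ℝ) ≠ 0)]
  have step2 := integral_comp_mul_left_Ioi g 0 (b := 2) two_pos
  rw [mul_zero] at step2
  have step3 : ∀ x ∈ Ioi (0:ℝ), g (2 * x) = 2 ^ (-a) * (Real.exp (-x) * x ^ (-a)) := by
    intro x hx
    have hx0 : 0 < x := hx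
    rw [hg]; simp only
    rw [show -(2*x)/2 = -x by ring, Real.mul_rpow (by norm_num) hx0.le]
    ring
  rw [setIntegral_congr_fun measurableSet_Ioi step3, integral_const_mul] at step2
  have hGamma : Real.Gamma (1 - a) = ∫ x in Ioi (0:ℝ), Real.exp (-x) * x ^ (-a) := by
    rw [Real.Gamma_eq_integral (by linarith : 0 < 1 - a)]
    refine setIntegral_congr_fun measurableSet_Ioi fun x hx => ?_
    norm_num
  -- step2 : 2^(-a) * Γ(1-a) = 2⁻¹ • ∫ g
  rw [← hGamma] at step2
  rw [smul_eq_mul] at step2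
  have : (∫ y in Ioi (0:ℝ), g y) = 2 * (2 ^ (-a) * Real.Gamma (1-a)) := by
    rw [step2]; ring
  rw [this, show (1:ℝ) - a = 1 + (-a) by ring, Real.rpow_add two_pos, Real.rpow_one]
  ring

private lemma hasDerivAt_H {a : ℝ} (ha : 0 < a) {u : ℝ} (hu : 0 < u) :
    HasDerivAt (fun u : ℝ => (1 - Real.exp (-1 / (2 * u))) * u ^ a / a)
      ((1 - Real.exp (-1 / (2 * u))) * u ^ (a - 1)
        - Real.exp (-1 / (2 * u)) * u ^ (a - 2) / (2 * a)) u := by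
  have hu' : u ≠ 0 := hu.ne'
  have h1 : HasDerivAt (fun u : ℝ => -1 / (2 * u)) (1 / (2 * u ^ 2)) u := by
    have h := (hasDerivAt_inv hu').const_mul (-1/2 : ℝ)
    have hfun : (fun u : ℝ => -1 / (2 * u)) = fun u : ℝ => -1/2 * u⁻¹ := by
      funext v; rw [div_eq_mul_inv, mul_inv]; ring
    have hd : (-1/2 : ℝ) * -(u ^ 2)⁻¹ = 1 / (2 * u ^ 2) := by
      field_simp
    rw [hfun, ← hd]
    exact h
  have h3 : HasDerivAt (fun u : ℝ => 1 - Real.exp (-1 / (2 * u)))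
      (-(Real.exp (-1 / (2 * u)) * (1 / (2 * u ^ 2)))) u := h1.exp.const_sub 1
  have h4 : HasDerivAt (fun u : ℝ => u ^ a) (a * u ^ (a - 1)) u :=
    Real.hasDerivAt_rpow_const (Or.inl hu')
  have h5 := (h3.mul h4).div_const a
  refine h5.congr_deriv ?_
  have e1 : u ^ a = u ^ (a - 2) * u ^ 2 := by
    rw [← Real.rpow_natCast u 2, ← Real.rpow_add hu]
    congr 1; push_cast; ring
  rw [e1]
  field_simp
  ring

private lemma I_value {a : ℝ} (ha : 0 < a) (ha1 : a < 1) :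
    ∫ u in Ioi (0:ℝ), (1 - Real.exp (-1 / (2 * u))) * u ^ (a - 1)
      = 2 ^ (-a) * Real.Gamma (1 - a) / a := by
  have hderiv : ∀ u ∈ Ioi (0:ℝ),
      HasDerivAt (fun u : ℝ => (1 - Real.exp (-1 / (2 * u))) * u ^ a / a)
        ((1 - Real.exp (-1 / (2 * u))) * u ^ (a - 1)
          - Real.exp (-1 / (2 * u)) * u ^ (a - 2) / (2 * a)) u :=
    fun u hu => hasDerivAt_H ha hu
  have hint : IntegrableOn (fun u : ℝ => (1 - Real.exp (-1 / (2 * u))) * u ^ (a - 1)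
      - Real.exp (-1 / (2 * u)) * u ^ (a - 2) / (2 * a)) (Ioi 0) :=
    (integrable_h ha ha1).sub ((integrable_psi ha ha1).div_const (2 * a))
  have hval : (1 - Real.exp (-1 / (2 * (0:ℝ)))) * (0:ℝ) ^ a / a = 0 := by
    rw [Real.zero_rpow ha.ne']; ring
  have hcont : ContinuousWithinAt (fun u : ℝ => (1 - Real.exp (-1 / (2 * u))) * u ^ a / a)
      (Ici 0) 0 := by
    rw [ContinuousWithinAt, hval]
    apply squeeze_zero' (g := fun u : ℝ => u ^ a / a)
    · filter_upwards [self_mem_nhdsWithin] with u (hu : 0 ≤ u)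
      rcases eq_or_lt_of_le hu with h | h
      · rw [← h, hval]
      · have h1 : 0 ≤ 1 - Real.exp (-1 / (2 * u)) := by
          rw [neg_div]; exact my_one_sub_exp_nonneg (by positivity)
        positivity
    · filter_upwards [self_mem_nhdsWithin] with u (hu : 0 ≤ u)
      rcases eq_or_lt_of_le hu with h | h
      · rw [← h, hval, Real.zero_rpow ha.ne']; simp
      · have h2 : 1 - Real.exp (-1 / (2 * u)) ≤ 1 := by
          have := Real.exp_pos (-1 / (2 * u)); linarith
        have h3 : (1 - Real.exp (-1 / (2 * u))) * u ^ a ≤ u ^ a := by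
          nlinarith [Real.rpow_nonneg h.le a]
        exact div_le_div_of_nonneg_right h3 ha.le
    · have h0 := ((Real.continuousAt_rpow_const 0 a (Or.inr ha.le)).tendsto).div_const a
      rw [Real.zero_rpow ha.ne', zero_div] at h0
      exact h0.mono_left nhdsWithin_le_nhds
  have htop : Tendsto (fun u : ℝ => (1 - Real.exp (-1 / (2 * u))) * u ^ a / a) atTop
      (𝓝 0) := by
    apply squeeze_zero' (g := fun u : ℝ => u ^ (-(1 - a)) / (2 * a))
    · filter_upwards [eventually_gt_atTop (0:ℝ)] with u hu
      have h1 : 0 ≤ 1 - Real.exp (-1 / (2 * u)) := by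
        rw [neg_div]; exact my_one_sub_exp_nonneg (by positivity)
      positivity
    · filter_upwards [eventually_gt_atTop (0:ℝ)] with u hu
      have h2 : 1 - Real.exp (-1 / (2 * u)) ≤ 1 / (2 * u) := by
        rw [neg_div]; exact my_one_sub_exp_le _
      have e1 : u ^ a = u ^ (-(1-a)) * u := by
        rw [← Real.rpow_add_one hu.ne' (-(1-a))]; congr 1; ring
      have h3 : (1 - Real.exp (-1 / (2 * u))) * u ^ a ≤ u ^ (-(1-a)) / 2 := by
        calc (1 - Real.exp (-1 / (2 * u))) * u ^ a ≤ (1 / (2 * u)) * u ^ a :=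
              mul_le_mul_of_nonneg_right h2 (Real.rpow_nonneg hu.le _)
          _ = u ^ (-(1-a)) / 2 := by rw [e1]; field_simp
      calc (1 - Real.exp (-1 / (2 * u))) * u ^ a / a ≤ (u ^ (-(1-a)) / 2) / a :=
            div_le_div_of_nonneg_right h3 ha.le
        _ = u ^ (-(1-a)) / (2 * a) := by ring
    · have h0 := (tendsto_rpow_neg_atTop (show 0 < 1 - a by linarith)).div_const (2 * a)
      rwa [zero_div] at h0
  have hFTC := integral_Ioi_of_hasDerivAt_of_tendsto hcont hderiv hint htop
  rw [hval, integral_sub (integrable_h ha ha1)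
    ((integrable_psi ha ha1).div_const (2 * a)), integral_div, psi_value ha ha1] at hFTC
  have h2a : (2:ℝ) ^ (1 - a) = 2 * 2 ^ (-a) := by
    rw [show (1:ℝ) - a = 1 + (-a) by ring, Real.rpow_add two_pos, Real.rpow_one]
  rw [h2a] at hFTC
  have := sub_eq_zero.mp (by linarith [hFTC] :
    (∫ u in Ioi (0:ℝ), (1 - Real.exp (-1 / (2 * u))) * u ^ (a - 1))
      - 2 * 2 ^ (-a) * Real.Gamma (1 - a) / (2 * a) = 0)
  rw [this]
  field_simp

/-- Small-`r` asymptotics of the Euclidean Green kernel in the fractional regime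
`n/2 < s < n/2 + 1`: `(G(0) - G(r))/r^{2s-n} → -Γ(n/2 - s)/(2^s π^{n/2} Γ(s))`. -/
theorem euclidean_green_kernel_asymptotics_fractional (n : ℕ) (s m : ℝ)
    (hm : 0 < m) (hs₁ : (n : ℝ) / 2 < s) (hs₂ : s < (n : ℝ) / 2 + 1) :
    Tendsto
      (fun r : ℝ =>
        (euclideanGreenKernel n s m 0 - euclideanGreenKernel n s m r) / r ^ (2 * s - (n : ℝ)))
      (nhdsWithin 0 (Set.Ioi 0))
      (nhds (-Real.Gamma ((n : ℝ) / 2 - s) /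
        (2 ^ s * Real.pi ^ ((n : ℝ) / 2) * Real.Gamma s))) := by
  have hn : (0:ℝ) ≤ (n : ℝ) / 2 := by positivity
  have hs0 : 0 < s := lt_of_le_of_lt hn hs₁
  set a : ℝ := s - (n : ℝ) / 2 with ha_def
  have ha : 0 < a := by rw [ha_def]; linarith
  have ha1 : a < 1 := by rw [ha_def]; linarith
  set C : ℝ := (2 * Real.pi) ^ (-(n : ℝ) / 2) * (Real.Gamma s)⁻¹ with hC
  -- integrability of the r = 0 profile
  have hf0 : IntegrableOn (fun t : ℝ => Real.exp (-m ^ 2 * t) * t ^ (a - 1)) (Ioi 0) := by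
    have h := integrableOn_rpow_mul_exp_neg_mul_rpow (p := 1) (s := a - 1) (b := m ^ 2)
      (by linarith) one_pos (by positivity)
    refine h.congr_fun (fun x hx => ?_) measurableSet_Ioi
    simp only [Real.rpow_one]; ring
  -- integrability of each profile
  have hfr : ∀ r : ℝ, IntegrableOn
      (fun t : ℝ => Real.exp (-r ^ 2 / (2 * t)) * Real.exp (-m ^ 2 * t) * t ^ (a - 1))
      (Ioi 0) := by
    intro r
    refine Integrable.mono' hf0 ?_ ?_
    · refine ContinuousOn.aestronglyMeasurable ?_ measurableSet_Ioi
      refine ContinuousOn.mul (ContinuousOn.mul ?_ ?_) (contOn_rpow (a - 1))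
      · exact Real.continuous_exp.comp_continuousOn <|
          continuousOn_const.div (continuous_const.mul continuous_id).continuousOn
            (fun x hx => by have : (0:ℝ) < x := hx; positivity)
      · exact (Real.continuous_exp.comp (continuous_const.mul continuous_id)).continuousOn
    · rw [ae_restrict_iff' measurableSet_Ioi]
      refine .of_forall fun t ht => ?_
      have ht0 : 0 < t := ht
      have h1 : Real.exp (-r ^ 2 / (2 * t)) ≤ 1 := my_exp_le_one
        (div_nonpos_of_nonpos_of_nonneg (neg_nonpos.mpr (by positivity)) (by positivity))
      have h1' : (0:ℝ) < Real.exp (-r ^ 2 / (2 * t)) := Real.exp_pos _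
      have h2 : (0:ℝ) < Real.exp (-m ^ 2 * t) := Real.exp_pos _
      have h3 : (0:ℝ) ≤ t ^ (a - 1) := Real.rpow_nonneg ht0.le _
      rw [Real.norm_eq_abs, abs_of_nonneg (by positivity)]
      exact mul_le_mul_of_nonneg_right (mul_le_of_le_one_left h2.le h1) h3
  -- step 1 : difference of kernels
  have hsub : ∀ r : ℝ, euclideanGreenKernel n s m 0 - euclideanGreenKernel n s m r
      = C * ∫ t in Ioi (0:ℝ),
          (1 - Real.exp (-r ^ 2 / (2 * t))) * Real.exp (-m ^ 2 * t) * t ^ (a - 1) := by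
    intro r
    rw [euclideanGreenKernel, euclideanGreenKernel, ← hC, ← ha_def, ← mul_sub,
      ← integral_sub (hfr 0) (hfr r)]
    congr 1
    refine setIntegral_congr_fun measurableSet_Ioi fun t ht => ?_
    have e0 : -(0:ℝ) ^ 2 / (2 * t) = 0 := by norm_num
    rw [e0, Real.exp_zero]
    ring
  -- step 2 : scaling substitution
  have hsubst : ∀ r : ℝ, 0 < r →
      (∫ t in Ioi (0:ℝ),
          (1 - Real.exp (-r ^ 2 / (2 * t))) * Real.exp (-m ^ 2 * t) * t ^ (a - 1))
      = r ^ (2 * s - (n : ℝ)) * ∫ x in Ioi (0:ℝ),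
          (1 - Real.exp (-1 / (2 * x))) * Real.exp (-(m ^ 2 * r ^ 2) * x) * x ^ (a - 1) := by
    intro r hr
    have hr2 : (0:ℝ) < r ^ 2 := by positivity
    have h1 := integral_comp_mul_left_Ioi
      (fun t : ℝ => (1 - Real.exp (-r ^ 2 / (2 * t))) * Real.exp (-m ^ 2 * t) * t ^ (a - 1))
      0 hr2
    rw [mul_zero] at h1
    have h2 : (∫ t in Ioi (0:ℝ),
        (1 - Real.exp (-r ^ 2 / (2 * t))) * Real.exp (-m ^ 2 * t) * t ^ (a - 1))
        = r ^ 2 * ∫ x in Ioi (0:ℝ),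
            (1 - Real.exp (-r ^ 2 / (2 * (r ^ 2 * x)))) * Real.exp (-m ^ 2 * (r ^ 2 * x))
              * (r ^ 2 * x) ^ (a - 1) := by
      rw [h1, smul_eq_mul, ← mul_assoc, mul_inv_cancel₀ hr2.ne', one_mul]
    rw [h2]
    have h3 : ∀ x ∈ Ioi (0:ℝ),
        (1 - Real.exp (-r ^ 2 / (2 * (r ^ 2 * x)))) * Real.exp (-m ^ 2 * (r ^ 2 * x))
            * (r ^ 2 * x) ^ (a - 1)
        = (r ^ 2) ^ (a - 1) *
            ((1 - Real.exp (-1 / (2 * x))) * Real.exp (-(m ^ 2 * r ^ 2) * x) * x ^ (a - 1)) := by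
      intro x hx
      have hx0 : 0 < x := hx
      have e1 : -r ^ 2 / (2 * (r ^ 2 * x)) = -1 / (2 * x) := by
        rw [div_eq_div_iff (by positivity) (by positivity)]; ring
      have e2 : -m ^ 2 * (r ^ 2 * x) = -(m ^ 2 * r ^ 2) * x := by ring
      rw [e1, e2, Real.mul_rpow hr2.le hx0.le]
      ring
    rw [setIntegral_congr_fun measurableSet_Ioi h3, integral_const_mul, ← mul_assoc]
    congr 1
    have h4 : (r:ℝ) ^ 2 = r ^ (2:ℝ) := by
      rw [← Real.rpow_natCast r 2]; norm_num
    rw [h4, ← Real.rpow_mul hr.le, ← Real.rpow_add hr]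
    congr 1
    rw [ha_def]; ring
  -- step 3 : dominated convergence
  have hDCT : Tendsto (fun r : ℝ => ∫ x in Ioi (0:ℝ),
      (1 - Real.exp (-1 / (2 * x))) * Real.exp (-(m ^ 2 * r ^ 2) * x) * x ^ (a - 1))
      (nhdsWithin 0 (Set.Ioi 0))
      (𝓝 (∫ x in Ioi (0:ℝ), (1 - Real.exp (-1 / (2 * x))) * x ^ (a - 1))) := by
    apply tendsto_integral_filter_of_dominated_convergence
      (fun x : ℝ => (1 - Real.exp (-1 / (2 * x))) * x ^ (a - 1))
    · exact Eventually.of_forall fun r =>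
        (contOn_phi (-(m ^ 2 * r ^ 2)) (a - 1)).aestronglyMeasurable measurableSet_Ioi
    · refine Eventually.of_forall fun r => ?_
      rw [ae_restrict_iff' measurableSet_Ioi]
      refine .of_forall fun x hx => ?_
      have hx0 : 0 < x := hx
      have h1 : 0 ≤ 1 - Real.exp (-1 / (2 * x)) := by
        rw [neg_div]; exact my_one_sub_exp_nonneg (by positivity)
      have h2 : Real.exp (-(m ^ 2 * r ^ 2) * x) ≤ 1 := my_exp_le_one (by
        have : (0:ℝ) ≤ m ^ 2 * r ^ 2 * x := by positivity
        nlinarith)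
      have h2' : (0:ℝ) < Real.exp (-(m ^ 2 * r ^ 2) * x) := Real.exp_pos _
      have h3 : (0:ℝ) ≤ x ^ (a - 1) := Real.rpow_nonneg hx0.le _
      rw [Real.norm_eq_abs, abs_of_nonneg (by positivity)]
      exact mul_le_mul_of_nonneg_right (mul_le_of_le_one_right h1 h2) h3
    · exact integrable_h ha ha1
    · refine .of_forall fun x => ?_
      have hc : Continuous fun r : ℝ =>
          (1 - Real.exp (-1 / (2 * x))) * Real.exp (-(m ^ 2 * r ^ 2) * x) * x ^ (a - 1) := by
        fun_prop
      refine Tendsto.mono_left ?_ nhdsWithin_le_nhds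
      have h0 := hc.tendsto 0
      convert h0 using 2
      norm_num
  -- step 4 : value of the limit
  have hval : C * ∫ x in Ioi (0:ℝ), (1 - Real.exp (-1 / (2 * x))) * x ^ (a - 1)
      = -Real.Gamma ((n : ℝ) / 2 - s) / (2 ^ s * Real.pi ^ ((n : ℝ) / 2) * Real.Gamma s) := by
    rw [I_value ha ha1]
    have hGamma : Real.Gamma (1 - a) = -a * Real.Gamma ((n : ℝ) / 2 - s) := by
      rw [show (1:ℝ) - a = -a + 1 by ring, Real.Gamma_add_one (neg_ne_zero.mpr ha.ne')]
      congr 2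
      rw [ha_def]; ring
    have h2pi : ((2:ℝ) * Real.pi) ^ (-(n : ℝ) / 2)
        = (2:ℝ) ^ (-(n : ℝ) / 2) * Real.pi ^ (-(n : ℝ) / 2) :=
      Real.mul_rpow (by norm_num) Real.pi_pos.le
    have h2 : (2:ℝ) ^ (-(n : ℝ) / 2) * (2:ℝ) ^ (-a) = ((2:ℝ) ^ s)⁻¹ := by
      rw [← Real.rpow_add two_pos, ← Real.rpow_neg (by norm_num : (0:ℝ) ≤ 2)]
      congr 1
      rw [ha_def]; ring
    have hpi : Real.pi ^ (-(n : ℝ) / 2) = (Real.pi ^ ((n : ℝ) / 2))⁻¹ := by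
      rw [← Real.rpow_neg Real.pi_pos.le]
      congr 1; ring
    have hGs : Real.Gamma s ≠ 0 := (Real.Gamma_pos_of_pos hs0).ne'
    have h2s : ((2:ℝ) ^ s) ≠ 0 := (Real.rpow_pos_of_pos two_pos s).ne'
    have hps : (Real.pi ^ ((n : ℝ) / 2)) ≠ 0 := (Real.rpow_pos_of_pos Real.pi_pos _).ne'
    have h2' : (2:ℝ) ^ (-(n:ℝ)/2) * (2:ℝ) ^ (-a) * (2:ℝ) ^ s = 1 := by
      rw [h2]; field_simp
    rw [hC, hGamma, h2pi, hpi]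
    field_simp
    have h2'' : (2:ℝ) ^ (-((n:ℝ)/2)) * (2:ℝ) ^ (-a) * (2:ℝ) ^ s = 1 := by
      rw [← neg_div]; exact h2'
    linear_combination (-Real.Gamma (((n:ℝ) - 2 * s) / 2)) * h2''
  -- conclusion
  have hkey : ∀ r : ℝ, r ∈ Set.Ioi (0:ℝ) →
      C * (∫ x in Ioi (0:ℝ),
          (1 - Real.exp (-1 / (2 * x))) * Real.exp (-(m ^ 2 * r ^ 2) * x) * x ^ (a - 1))
      = (euclideanGreenKernel n s m 0 - euclideanGreenKernel n s m r)
          / r ^ (2 * s - (n : ℝ)) := by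
    intro r hr
    have hr0 : 0 < r := hr
    have hpow : (0:ℝ) < r ^ (2 * s - (n : ℝ)) := Real.rpow_pos_of_pos hr0 _
    have hXne : r ^ (2 * s - (n:ℝ)) ≠ 0 := hpow.ne'
    rw [hsub r, hsubst r hr0]
    rw [mul_div_assoc, mul_div_cancel_left₀ _ hXne]
  have hlim := hDCT.const_mul C
  rw [hval] at hlim
  refine Tendsto.congr' ?_ hlim
  filter_upwards [self_mem_nhdsWithin] with r hr
  exact hkey r hr
end

section
/- Let v(r) = (π - r)²/(4π²) + 1/(8π²) - 1/12 and u(r) = (1/(2π²))·(-(1/2) + (π - r)·cot(r)) for r ∈ (0, π). Then v''(r) + 2·cot(r)·v'(r) = -2·u(r) and ∫₀^π v(r)·sin²(r) dr = 0. -/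
open Real

private lemma vderiv :
    deriv (fun r : ℝ => (Real.pi - r) ^ 2 / (4 * Real.pi ^ 2) + 1 / (8 * Real.pi ^ 2) - 1 / 12)
      = fun r => (r - Real.pi) / (2 * Real.pi ^ 2) := by
  funext r
  have h1 : HasDerivAt (fun r : ℝ => Real.pi - r) (-1) r := (hasDerivAt_id r).const_sub Real.pi
  have h3 := ((h1.pow 2).div_const (4 * Real.pi ^ 2)).add_const
      (1 / (8 * Real.pi ^ 2)) |>.sub_const (1 / 12)
  rw [(show HasDerivAt (fun r : ℝ => (Real.pi - r) ^ 2 / (4 * Real.pi ^ 2) + 1 / (8 * Real.pi ^ 2) - 1 / 12) _ r from h3).deriv]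
  have hπ : Real.pi ≠ 0 := Real.pi_ne_zero
  field_simp
  ring

/-- antiderivative of `v r * sin r ^ 2` -/
private noncomputable def F (r : ℝ) : ℝ :=
  (-(Real.pi - r) ^ 3 / 6 - (Real.pi - r) ^ 2 * Real.sin r * Real.cos r / 2
      + (Real.pi - r) * (1 - 2 * Real.sin r ^ 2) / 4 + Real.sin r * Real.cos r / 4)
    / (4 * Real.pi ^ 2)
  + (1 / (8 * Real.pi ^ 2) - 1 / 12) * (r / 2 - Real.sin r * Real.cos r / 2)

private lemma Fderiv (r : ℝ) :
    HasDerivAt F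
      (((Real.pi - r) ^ 2 / (4 * Real.pi ^ 2) + 1 / (8 * Real.pi ^ 2) - 1 / 12)
        * Real.sin r ^ 2) r := by
  have hs : HasDerivAt Real.sin (Real.cos r) r := Real.hasDerivAt_sin r
  have hc : HasDerivAt Real.cos (-Real.sin r) r := Real.hasDerivAt_cos r
  have hp : HasDerivAt (fun r : ℝ => Real.pi - r) (-1) r := (hasDerivAt_id r).const_sub Real.pi
  have h1 := ((hp.pow 3).neg).div_const 6
  have h2 := (((hp.pow 2).mul hs).mul hc).div_const 2
  have h3 := (hp.mul (((hs.pow 2).const_mul 2).const_sub 1)).div_const 4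
  have h4 := (hs.mul hc).div_const 4
  have h5 := (((hasDerivAt_id r).div_const 2).sub ((hs.mul hc).div_const 2)).const_mul
      (1 / (8 * Real.pi ^ 2) - 1 / 12)
  have H := ((((h1.sub h2).add h3).add h4).div_const (4 * Real.pi ^ 2)).add h5
  refine H.congr_deriv ?_
  symm
  simp only [Pi.pow_apply, Pi.mul_apply]
  have hcs := Real.sin_sq_add_cos_sq r
  linear_combination
    (((Real.pi - r) ^ 2 / 2 - 1 / 4) / (4 * Real.pi ^ 2)
      + (1 / (8 * Real.pi ^ 2) - 1 / 12) * (1 / 2)) * hcs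

/-- The grounded Green kernel of order 2 on the unit 3-sphere,
`v(r) = (π-r)²/(4π²) + 1/(8π²) - 1/12`, solves `v'' + 2 cot(r) v' = -2u` where
`u = G̊^{S³}_{1,0}`, and has zero spherical average. -/
theorem sphere3_green_kernel_order_two :
    let v : ℝ → ℝ := fun r =>
      (Real.pi - r) ^ 2 / (4 * Real.pi ^ 2) + 1 / (8 * Real.pi ^ 2) - 1 / 12
    let u : ℝ → ℝ := fun r =>
      (1 / (2 * Real.pi ^ 2)) * (-(1 / 2) + (Real.pi - r) * (Real.cos r / Real.sin r))
    (∀ r ∈ Set.Ioo (0 : ℝ) Real.pi,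
        deriv (deriv v) r + 2 * (Real.cos r / Real.sin r) * deriv v r = -2 * u r) ∧
      (∫ r in (0 : ℝ)..Real.pi, v r * Real.sin r ^ 2) = 0 := by
  intro v u
  have hv : v = fun r =>
      (Real.pi - r) ^ 2 / (4 * Real.pi ^ 2) + 1 / (8 * Real.pi ^ 2) - 1 / 12 := rfl
  constructor
  · intro r hr
    rw [hv, vderiv]
    have h2 : deriv (fun r : ℝ => (r - Real.pi) / (2 * Real.pi ^ 2)) r
        = 1 / (2 * Real.pi ^ 2) := by
      have := ((hasDerivAt_id r).sub_const Real.pi).div_const (2 * Real.pi ^ 2)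
      simp [this.deriv]
    rw [h2]
    show _ = -2 * ((1 / (2 * Real.pi ^ 2)) *
      (-(1 / 2) + (Real.pi - r) * (Real.cos r / Real.sin r)))
    ring
  · have hint : ∀ x ∈ Set.uIcc (0 : ℝ) Real.pi, HasDerivAt F (v x * Real.sin x ^ 2) x :=
      fun x _ => Fderiv x
    have hcont : IntervalIntegrable (fun x => v x * Real.sin x ^ 2) MeasureTheory.volume 0 Real.pi := by
      apply Continuous.intervalIntegrable
      rw [hv]
      continuity
    rw [intervalIntegral.integral_eq_sub_of_hasDerivAt hint hcont]
    simp only [F, Real.sin_pi, Real.cos_pi, Real.sin_zero, Real.cos_zero]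
    have hπ : Real.pi ≠ 0 := Real.pi_ne_zero
    field_simp
    ring
end
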